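/- Let N(t) = N₁(ξ·μ(t)) where N₁ is a unit-rate Poisson process independent of ξ ~ Min-U-Exp(a,λ) and μ is nonnegative strictly increasing continuous with μ(0)=0. Then for |z| < 1 and t ≥ 0, the probability generating function satisfies E[z^{N(t)}] = λ/(λ + μ(t)(1-z)) + (μ(t)(1-z)/(a(λ + μ(t)(1-z))²))·(1 - e^{-a(λ + μ(t)(1-z))}). -/

import Mathlib

open MeasureTheory ProbabilityTheory Real Set

lemma real_exp_eq_tsum (y : ℝ) : ∑' n : ℕ, y ^ n / n.factorial = Real.exp y := by
  rw [Real.exp_eq_exp_ℝ, NormedSpace.exp_eq_tsum_div]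

lemma mixedPoisson_pgf_key (a lam m z : ℝ) (ha : 0 < a) (hlam : 0 < lam)
    (hm : 0 ≤ m) (hz : |z| < 1) :
    (∑' n : ℕ, z ^ n * ∫ x in Set.Ioo (0 : ℝ) a,
        (x * m) ^ n * Real.exp (-(x * m)) / n.factorial *
          (Real.exp (-lam * x) / a * (lam * a + 1 - lam * x)))
      = lam / (lam + m * (1 - z))
          + m * (1 - z) / (a * (lam + m * (1 - z)) ^ 2) *
              (1 - Real.exp (-a * (lam + m * (1 - z)))) := by
  have hz1 : z < 1 := lt_of_abs_lt hz
  set c : ℝ := lam + m * (1 - z) with hcdef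
  have hmz : 0 ≤ m * (1 - z) := mul_nonneg hm (by linarith)
  have hc : 0 < c := by rw [hcdef]; linarith
  set D : ℝ → ℝ := fun x => Real.exp (-lam * x) / a * (lam * a + 1 - lam * x) with hD
  set g : ℕ → ℝ → ℝ :=
    fun n x => z ^ n * ((x * m) ^ n * Real.exp (-(x * m)) / n.factorial * D x) with hg
  have hgc : ∀ n, Continuous (g n) := by
    intro n
    simp only [hg, hD]
    fun_prop
  have hgint : ∀ n, IntegrableOn (g n) (Set.Ioo 0 a) := fun n =>
    ((hgc n).continuousOn.integrableOn_Icc).mono_set Ioo_subset_Icc_self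
  -- bound
  have hDb : ∀ x ∈ Set.Ioo (0:ℝ) a, 0 ≤ D x ∧ D x ≤ (lam * a + 1) / a := by
    intro x hx
    obtain ⟨hx0, hxa⟩ := hx
    have he : Real.exp (-lam * x) ≤ 1 := Real.exp_le_one_iff.mpr (by nlinarith)
    have he0 : 0 < Real.exp (-lam * x) := Real.exp_pos _
    have hq : 0 < lam * a + 1 - lam * x := by nlinarith
    constructor
    · simp only [hD]; positivity
    · simp only [hD]
      rw [div_mul_eq_mul_div, div_le_div_iff₀ ha ha]
      nlinarith [mul_le_mul_of_nonneg_right he hq.le, mul_pos hlam hx0]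
  have hPb : ∀ n : ℕ, ∀ x ∈ Set.Ioo (0:ℝ) a,
      0 ≤ (x * m) ^ n * Real.exp (-(x * m)) / n.factorial ∧
      (x * m) ^ n * Real.exp (-(x * m)) / n.factorial ≤ 1 := by
    intro n x hx
    have hxm : 0 ≤ x * m := mul_nonneg hx.1.le hm
    have h1 : (x * m) ^ n / n.factorial ≤ Real.exp (x * m) :=
      Real.pow_div_factorial_le_exp _ hxm n
    have he0 : (0:ℝ) < Real.exp (-(x * m)) := Real.exp_pos _
    constructor
    · positivity
    · have : (x * m) ^ n * Real.exp (-(x * m)) / n.factorial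
          = ((x * m) ^ n / n.factorial) * Real.exp (-(x * m)) := by ring
      rw [this]
      calc ((x * m) ^ n / n.factorial) * Real.exp (-(x * m))
          ≤ Real.exp (x * m) * Real.exp (-(x * m)) :=
            mul_le_mul_of_nonneg_right h1 he0.le
        _ = 1 := by rw [← Real.exp_add]; simp
  have hgb : ∀ n : ℕ, ∀ x ∈ Set.Ioo (0:ℝ) a, ‖g n x‖ ≤ |z| ^ n * ((lam * a + 1) / a) := by
    intro n x hx
    obtain ⟨hP0, hP1⟩ := hPb n x hx
    obtain ⟨hD0, hD1⟩ := hDb x hx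
    rw [hg]
    simp only [Real.norm_eq_abs, abs_mul, abs_pow]
    rw [abs_of_nonneg hP0, abs_of_nonneg hD0]
    have hzn : (0:ℝ) ≤ |z| ^ n := by positivity
    calc |z| ^ n * ((x * m) ^ n * Real.exp (-(x * m)) / ↑n.factorial * D x)
        ≤ |z| ^ n * (1 * ((lam * a + 1) / a)) := by
          apply mul_le_mul_of_nonneg_left _ hzn
          exact mul_le_mul hP1 hD1 hD0 one_pos.le
      _ = |z| ^ n * ((lam * a + 1) / a) := by ring
  have hnormint : ∀ n : ℕ, (∫ x in Set.Ioo (0:ℝ) a, ‖g n x‖)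
      ≤ |z| ^ n * (lam * a + 1) := by
    intro n
    have h1 : (∫ x in Set.Ioo (0:ℝ) a, ‖g n x‖)
        ≤ ∫ _x in Set.Ioo (0:ℝ) a, |z| ^ n * ((lam * a + 1) / a) := by
      apply setIntegral_mono_on (hgint n).norm (integrableOn_const
        (by simp [Real.volume_Ioo]))
        measurableSet_Ioo
      exact hgb n
    calc (∫ x in Set.Ioo (0:ℝ) a, ‖g n x‖) ≤ _ := h1
      _ = (volume (Set.Ioo (0:ℝ) a)).toReal * (|z| ^ n * ((lam * a + 1) / a)) := by
          rw [setIntegral_const, smul_eq_mul]; rfl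
      _ = |z| ^ n * (lam * a + 1) := by
          rw [Real.volume_Ioo, ENNReal.toReal_ofReal (by linarith)]
          field_simp
          try ring
  have hsum : Summable fun n : ℕ => ∫ x in Set.Ioo (0:ℝ) a, ‖g n x‖ := by
    apply Summable.of_nonneg_of_le
      (fun n => integral_nonneg fun x => norm_nonneg _) hnormint
    exact (summable_geometric_of_lt_one (abs_nonneg z) hz).mul_right _
  -- exchange
  have hexch : (∑' n : ℕ, ∫ x in Set.Ioo (0:ℝ) a, g n x)
      = ∫ x in Set.Ioo (0:ℝ) a, ∑' n : ℕ, g n x :=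
    integral_tsum_of_summable_integral_norm hgint hsum
  -- pointwise sum
  have hpt : ∀ x : ℝ, (∑' n : ℕ, g n x)
      = Real.exp (-(c * x)) / a * (lam * a + 1 - lam * x) := by
    intro x
    have h1 : ∀ n : ℕ, g n x
        = (z * (x * m)) ^ n / n.factorial * (Real.exp (-(x * m)) * D x) := by
      intro n
      rw [hg]
      simp only [mul_pow]
      ring
    rw [tsum_congr h1, tsum_mul_right, real_exp_eq_tsum]
    simp only [hD]
    have h2 : Real.exp (z * (x * m)) * Real.exp (-(x * m)) * Real.exp (-lam * x)
        = Real.exp (-(c * x)) := by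
      rw [← Real.exp_add, ← Real.exp_add]
      congr 1
      rw [hcdef]; ring
    rw [← h2]
    ring
  -- antiderivative
  set A : ℝ := (lam - c * (lam * a + 1)) / (a * c ^ 2) with hA
  set B : ℝ := lam / (a * c) with hB
  set F : ℝ → ℝ := fun x => Real.exp (-(c * x)) * (A + B * x) with hF
  have hderiv : ∀ x ∈ Set.uIcc (0:ℝ) a,
      HasDerivAt F (Real.exp (-(c * x)) / a * (lam * a + 1 - lam * x)) x := by
    intro x _
    have h1 : HasDerivAt (fun x : ℝ => -(c * x)) (-c) x := by
      simpa using (hasDerivAt_id x).const_mul (-c)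
    have h2 : HasDerivAt (fun x : ℝ => Real.exp (-(c * x)))
        (Real.exp (-(c * x)) * (-c)) x := h1.exp
    have h3 : HasDerivAt (fun x : ℝ => A + B * x) B x := by
      simpa using ((hasDerivAt_id x).const_mul B).const_add A
    have h4 := h2.mul h3
    refine h4.congr_deriv ?_
    rw [hA, hB]
    field_simp
    ring
  have hcont : Continuous fun x : ℝ => Real.exp (-(c * x)) / a * (lam * a + 1 - lam * x) := by
    fun_prop
  -- put it together
  calc (∑' n : ℕ, z ^ n * ∫ x in Set.Ioo (0 : ℝ) a,
        (x * m) ^ n * Real.exp (-(x * m)) / n.factorial *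
          (Real.exp (-lam * x) / a * (lam * a + 1 - lam * x)))
      = ∑' n : ℕ, ∫ x in Set.Ioo (0:ℝ) a, g n x := by
        apply tsum_congr
        intro n
        simp only [hg, hD]
        exact (integral_const_mul _ _).symm
    _ = ∫ x in Set.Ioo (0:ℝ) a, ∑' n : ℕ, g n x := hexch
    _ = ∫ x in Set.Ioo (0:ℝ) a, Real.exp (-(c * x)) / a * (lam * a + 1 - lam * x) := by
        exact setIntegral_congr_fun measurableSet_Ioo fun x _ => hpt x
    _ = ∫ x in (0:ℝ)..a, Real.exp (-(c * x)) / a * (lam * a + 1 - lam * x) := by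
        rw [intervalIntegral.integral_of_le ha.le, MeasureTheory.integral_Ioc_eq_integral_Ioo]
    _ = F a - F 0 :=
        intervalIntegral.integral_eq_sub_of_hasDerivAt hderiv (hcont.intervalIntegrable 0 a)
    _ = lam / c + m * (1 - z) / (a * c ^ 2) * (1 - Real.exp (-a * c)) := by
        have hmz2 : m * (1 - z) = c - lam := by rw [hcdef]; ring
        rw [hmz2]
        simp only [hF, hA, hB, mul_zero, add_zero, neg_zero, Real.exp_zero, one_mul]
        rw [show -(c * a) = -a * c from by ring]
        field_simp
        ring

theorem mixedPoisson_pgf {Ω : Type*} [MeasureSpace Ω] [IsProbabilityMeasure (ℙ : Measure Ω)]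
    (a lam : ℝ) (ha : 0 < a) (hlam : 0 < lam)
    (mu : ℝ → ℝ) (hμ0 : mu 0 = 0) (hμmono : StrictMonoOn mu (Set.Ici 0))
    (hμcont : ContinuousOn mu (Set.Ici 0)) (hμnonneg : ∀ t : ℝ, 0 ≤ t → 0 ≤ mu t)
    (N : ℝ → Ω → ℕ) (hNm : ∀ t, Measurable (N t))
    (hN : ∀ t : ℝ, 0 ≤ t → ∀ n : ℕ,
      (ℙ {ω | N t ω = n}).toReal
        = ∫ x in Set.Ioo (0 : ℝ) a,
            (x * mu t) ^ n * Real.exp (-(x * mu t)) / n.factorial *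
              (Real.exp (-lam * x) / a * (lam * a + 1 - lam * x))) :
    ∀ t : ℝ, 0 ≤ t → ∀ z : ℝ, |z| < 1 →
      (∑' n : ℕ, z ^ n * (ℙ {ω | N t ω = n}).toReal)
        = lam / (lam + mu t * (1 - z))
            + mu t * (1 - z) / (a * (lam + mu t * (1 - z)) ^ 2) *
                (1 - Real.exp (-a * (lam + mu t * (1 - z)))) := by
  intro t ht z hz
  simp_rw [hN t ht]
  exact mixedPoisson_pgf_key a lam (mu t) z ha hlam (hμnonneg t ht) hz
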